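/- Let G: P2 → (−∞, +∞] be lower semi-continuous with Dom(G) ⊂ P2^r, let γ > 0, let p ∈ P2^r, and define F(ρ) = G(ρ) + (1/(2γ)) W2(p, ρ)². Let ρ ∈ P2^r and let T_ρ^p denote the optimal transport map from ρ to p. If ξ is a strong Fréchet subdifferential of F at ρ, then ξ + (T_ρ^p − Id)/γ is a strong Fréchet subdifferential of G at ρ. -/

import Mathlib

open MeasureTheory ENNReal Real
open scoped RealInnerProductSpace

noncomputable section

abbrev Ed (d : ℕ) : Type := EuclideanSpace ℝ (Fin d)

variable {d : ℕ}

/-- Finite second moment. -/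
def HasFiniteSecondMoment (μ : Measure (Ed d)) : Prop :=
  ∫⁻ x, (‖x‖₊ : ℝ≥0∞) ^ 2 ∂μ < ⊤

/-- `μ ∈ P₂`: probability measure with finite second moment. -/
def MemP2 (μ : Measure (Ed d)) : Prop :=
  IsProbabilityMeasure μ ∧ HasFiniteSecondMoment μ

/-- `μ ∈ P₂ʳ`: member of `P₂` absolutely continuous w.r.t. Lebesgue. -/
def MemP2r (μ : Measure (Ed d)) : Prop :=
  MemP2 μ ∧ μ ≪ (volume : Measure (Ed d))

/-- Second moment `M₂`. -/
def secondMoment (μ : Measure (Ed d)) : ℝ := ∫ x, ‖x‖ ^ 2 ∂μ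

/-- couplings of μ and ν. -/
def IsCoupling (pl : Measure (Ed d × Ed d)) (μ ν : Measure (Ed d)) : Prop :=
  pl.map Prod.fst = μ ∧ pl.map Prod.snd = ν

/-- Squared Wasserstein-2 distance (in `ℝ≥0∞`). -/
def W2sq (μ ν : Measure (Ed d)) : ℝ≥0∞ :=
  ⨅ (pl : Measure (Ed d × Ed d)) (_ : IsCoupling pl μ ν),
    ∫⁻ z, (‖z.1 - z.2‖₊ : ℝ≥0∞) ^ 2 ∂pl

/-- Wasserstein-2 distance (real-valued). -/
def W2 (μ ν : Measure (Ed d)) : ℝ := Real.sqrt (W2sq μ ν).toReal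

/-- `T` is the optimal transport map from `μ` to `ν`. -/
def IsOTMap (μ ν : Measure (Ed d)) (T : Ed d → Ed d) : Prop :=
  Measurable T ∧ μ.map T = ν ∧
    (∫⁻ x, (‖x - T x‖₊ : ℝ≥0∞) ^ 2 ∂μ) = W2sq μ ν

/-- L²(μ) norm of a vector field. -/
def L2norm (μ : Measure (Ed d)) (v : Ed d → Ed d) : ℝ := Real.sqrt (∫ x, ‖v x‖ ^ 2 ∂μ)

/-- L²(μ) inner product of vector fields. -/
def L2inner (μ : Measure (Ed d)) (u v : Ed d → Ed d) : ℝ := ∫ x, ⟪u x, v x⟫ ∂μ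

/-- Strong Fréchet subdifferential of `φ` at `μ`. -/
def IsStrongSubdiff (φ : Measure (Ed d) → EReal) (μ : Measure (Ed d)) (ξ : Ed d → Ed d) : Prop :=
  MemLp ξ 2 μ ∧
  ∀ ε : ℝ, 0 < ε → ∃ δ : ℝ, 0 < δ ∧
    ∀ v : Ed d → Ed d, MemLp v 2 μ → L2norm μ v ≤ δ →
      φ (μ.map (fun x => x + v x)) ≥ φ μ + ((L2inner μ ξ v - ε * L2norm μ v : ℝ) : EReal)

/-- λ-convexity along generalized geodesics. -/
def ConvexAGG (φ : Measure (Ed d) → EReal) (lam : ℝ) : Prop :=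
  ∀ (ν μ₁ μ₂ : Measure (Ed d)), MemP2r ν → MemP2 μ₁ → MemP2 μ₂ →
    ∀ (T₁ T₂ : Ed d → Ed d), IsOTMap ν μ₁ T₁ → IsOTMap ν μ₂ T₂ →
      ∀ t : ℝ, 0 ≤ t → t ≤ 1 →
        φ (ν.map (fun x => (1 - t) • T₁ x + t • T₂ x)) ≤
          ((1 - t : ℝ) : EReal) * φ μ₁ + (t : EReal) * φ μ₂ -
            (((lam / 2) * t * (1 - t) * ∫ x, ‖T₁ x - T₂ x‖ ^ 2 ∂ν : ℝ) : EReal)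

-- Kullback–Leibler divergence, `+∞` if not absolutely continuous.
open Classical in
def KLdiv (μ ν : Measure (Ed d)) : ℝ≥0∞ :=
  if μ ≪ ν ∧ Integrable (llr μ ν) μ then ENNReal.ofReal (∫ x, llr μ ν x ∂μ) else ⊤

/-- Total variation distance. -/
def TVdist (μ ν : Measure (Ed d)) : ℝ :=
  ⨆ s : {s : Set (Ed d) // MeasurableSet s}, |(μ s.1).toReal - (ν s.1).toReal|

/-- Lower semicontinuity on probability measures with the weak topology. -/
def LscOnP2 (φ : Measure (Ed d) → EReal) : Prop :=
  LowerSemicontinuous (fun μ : ProbabilityMeasure (Ed d) => φ (μ : Measure (Ed d)))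

/-- The JKO objective `F(ρ) = G(ρ) + W₂²(μ, ρ)/(2γ)`. -/
def JKOfun (G : Measure (Ed d) → EReal) (γ : ℝ) (μ ρ : Measure (Ed d)) : EReal :=
  G ρ + ((ENNReal.ofReal (1 / (2 * γ)) * W2sq μ ρ : ℝ≥0∞) : EReal)



section AuxLemmas

lemma cost_meas : Measurable (fun z : Ed d × Ed d => (‖z.1 - z.2‖₊ : ℝ≥0∞) ^ 2) :=
  ((measurable_fst.sub measurable_snd).nnnorm.coe_nnreal_ennreal).pow_const 2

lemma W2sq_le_cost {μ ν : Measure (Ed d)} {pl : Measure (Ed d × Ed d)}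
    (h : IsCoupling pl μ ν) :
    W2sq μ ν ≤ ∫⁻ z, (‖z.1 - z.2‖₊ : ℝ≥0∞) ^ 2 ∂pl :=
  iInf_le_of_le pl (iInf_le _ h)

lemma W2sq_symm_le (μ ν : Measure (Ed d)) : W2sq ν μ ≤ W2sq μ ν := by
  refine le_iInf₂ fun pl hpl => ?_
  have hswap : IsCoupling (pl.map Prod.swap) ν μ := by
    constructor
    · rw [Measure.map_map measurable_fst measurable_swap]
      exact hpl.2
    · rw [Measure.map_map measurable_snd measurable_swap]
      exact hpl.1
  refine le_trans (W2sq_le_cost hswap) (le_of_eq ?_)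
  rw [lintegral_map cost_meas measurable_swap]
  exact lintegral_congr fun z => by
    rw [Prod.fst_swap, Prod.snd_swap, ← neg_sub z.1 z.2, nnnorm_neg]

lemma W2sq_symm (μ ν : Measure (Ed d)) : W2sq μ ν = W2sq ν μ :=
  le_antisymm (W2sq_symm_le _ _) (W2sq_symm_le _ _)

lemma lint_fst_coupling {pl : Measure (Ed d × Ed d)} {μ ν : Measure (Ed d)}
    (h : IsCoupling pl μ ν) {f : Ed d → ℝ≥0∞} (hf : Measurable f) :
    ∫⁻ z, f z.1 ∂pl = ∫⁻ x, f x ∂μ := by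
  rw [← h.1, lintegral_map hf measurable_fst]

lemma lint_snd_coupling {pl : Measure (Ed d × Ed d)} {μ ν : Measure (Ed d)}
    (h : IsCoupling pl μ ν) {f : Ed d → ℝ≥0∞} (hf : Measurable f) :
    ∫⁻ z, f z.2 ∂pl = ∫⁻ x, f x ∂ν := by
  rw [← h.2, lintegral_map hf measurable_snd]

lemma W2sq_lt_top {μ ν : Measure (Ed d)} (hμ : MemP2 μ) (hν : MemP2 ν) :
    W2sq μ ν < ⊤ := by
  haveI := hμ.1; haveI := hν.1
  have hc : IsCoupling (μ.prod ν) μ ν := by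
    constructor
    · rw [Measure.map_fst_prod]; simp
    · rw [Measure.map_snd_prod]; simp
  have hb : ∀ z : Ed d × Ed d, (‖z.1 - z.2‖₊ : ℝ≥0∞) ^ 2 ≤
      4 * ((‖z.1‖₊ : ℝ≥0∞) ^ 2 + (‖z.2‖₊ : ℝ≥0∞) ^ 2) := by
    intro z
    set A := (‖z.1‖₊ : ℝ≥0∞)
    set B := (‖z.2‖₊ : ℝ≥0∞)
    have h1 : (‖z.1 - z.2‖₊ : ℝ≥0∞) ≤ A + B := by
      rw [← ENNReal.coe_add]
      exact ENNReal.coe_le_coe.mpr (nnnorm_sub_le _ _)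
    have h2 : A + B ≤ 2 * (A ⊔ B) := by
      rw [two_mul]; exact add_le_add le_sup_left le_sup_right
    have h3 : (A ⊔ B) ^ 2 ≤ A ^ 2 + B ^ 2 := by
      rcases le_total A B with h | h
      · rw [sup_eq_right.mpr h]; exact le_add_self
      · rw [sup_eq_left.mpr h]; exact le_self_add
    calc (‖z.1 - z.2‖₊ : ℝ≥0∞) ^ 2 ≤ (2 * (A ⊔ B)) ^ 2 :=
          pow_le_pow_left' (le_trans h1 h2) 2
      _ = 4 * (A ⊔ B) ^ 2 := by rw [mul_pow]; norm_num
      _ ≤ 4 * (A ^ 2 + B ^ 2) := mul_le_mul_right h3 4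
  have hm1 : Measurable (fun x : Ed d => (‖x‖₊ : ℝ≥0∞) ^ 2) :=
    measurable_id.nnnorm.coe_nnreal_ennreal.pow_const 2
  refine lt_of_le_of_lt (W2sq_le_cost hc) (lt_of_le_of_lt (lintegral_mono hb) ?_)
  rw [lintegral_const_mul (f := fun a : Ed d × Ed d => (‖a.1‖₊ : ℝ≥0∞) ^ 2 + (‖a.2‖₊ : ℝ≥0∞) ^ 2)
        _ ((measurable_fst.nnnorm.coe_nnreal_ennreal.pow_const 2).add
        (measurable_snd.nnnorm.coe_nnreal_ennreal.pow_const 2)),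
      lintegral_add_left (measurable_fst.nnnorm.coe_nnreal_ennreal.pow_const 2),
      lint_fst_coupling hc hm1, lint_snd_coupling hc hm1]
  exact ENNReal.mul_lt_top (by norm_num) (ENNReal.add_lt_top.mpr ⟨hμ.2, hν.2⟩)

lemma W2sq_map_le {ρ p : Measure (Ed d)} {T R : Ed d → Ed d}
    (hT : Measurable T) (hTp : ρ.map T = p) (hR : AEMeasurable R ρ) :
    W2sq p (ρ.map R) ≤ ∫⁻ x, (‖T x - R x‖₊ : ℝ≥0∞) ^ 2 ∂ρ := by
  have hpair : AEMeasurable (fun x => (T x, R x)) ρ := hT.aemeasurable.prodMk hR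
  have h1 : (ρ.map (fun x => (T x, R x))).map Prod.fst = p := by
    rw [AEMeasurable.map_map_of_aemeasurable measurable_fst.aemeasurable hpair]
    exact hTp
  have h2 : (ρ.map (fun x => (T x, R x))).map Prod.snd = ρ.map R := by
    rw [AEMeasurable.map_map_of_aemeasurable measurable_snd.aemeasurable hpair]
    rfl
  refine le_trans (W2sq_le_cost ⟨h1, h2⟩) (le_of_eq ?_)
  exact lintegral_map' cost_meas.aemeasurable hpair

lemma sq_lintegral_eq {μ : Measure (Ed d)} {f : Ed d → Ed d} (hf : MemLp f 2 μ) :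
    ∫⁻ x, (‖f x‖₊ : ℝ≥0∞) ^ 2 ∂μ = ENNReal.ofReal (∫ x, ‖f x‖ ^ 2 ∂μ) := by
  have hint : Integrable (fun x => ‖f x‖ ^ 2) μ :=
    (memLp_two_iff_integrable_sq_norm hf.1).mp hf
  rw [MeasureTheory.ofReal_integral_eq_lintegral_ofReal hint
    (Filter.Eventually.of_forall fun x => sq_nonneg _)]
  exact lintegral_congr fun x => by
    rw [← ENNReal.ofReal_coe_nnreal, coe_nnnorm, ← ENNReal.ofReal_pow (norm_nonneg _)]

lemma memℒp_of_lintegral_sq_lt_top {μ : Measure (Ed d)} {f : Ed d → Ed d}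
    (hf : AEStronglyMeasurable f μ) (h : ∫⁻ x, (‖f x‖₊ : ℝ≥0∞) ^ 2 ∂μ < ⊤) :
    MemLp f 2 μ := by
  rw [memLp_two_iff_integrable_sq_norm hf]
  refine ⟨hf.norm.pow 2, ?_⟩
  rw [hasFiniteIntegral_def]
  refine lt_of_le_of_lt (le_of_eq (lintegral_congr fun x => ?_)) h
  rw [enorm_pow, enorm_norm, enorm_eq_nnnorm]

lemma integrable_inner_of_memℒp {μ : Measure (Ed d)} {f g : Ed d → Ed d}
    (hf : MemLp f 2 μ) (hg : MemLp g 2 μ) :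
    Integrable (fun x => ⟪f x, g x⟫) μ := by
  have hmul : MemLp ((fun x => ‖g x‖) • (fun x => ‖f x‖)) 1 μ :=
    hf.norm.smul hg.norm
  have hint : Integrable (fun x => ‖g x‖ * ‖f x‖) μ := by
    have := memLp_one_iff_integrable.mp hmul
    simpa [Pi.smul_apply, smul_eq_mul, Pi.mul_def] using this
  refine hint.mono' (hf.1.inner hg.1) (Filter.Eventually.of_forall fun x => ?_)
  calc ‖⟪f x, g x⟫‖ = |⟪f x, g x⟫| := rfl
    _ ≤ ‖f x‖ * ‖g x‖ := abs_real_inner_le_norm _ _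
    _ = ‖g x‖ * ‖f x‖ := mul_comm _ _

lemma ereal_key {x y : EReal} {B ar r' : ℝ} (h : y + (ar : ℝ) ≤ x + (B : ℝ))
    (hr : B + r' ≤ ar) : y + (r' : ℝ) ≤ x := by
  induction y with
  | bot => rw [EReal.bot_add]; exact bot_le
  | top =>
    rw [EReal.top_add_coe] at h ⊢
    induction x with
    | bot => rw [EReal.bot_add] at h; exact absurd h (by simp)
    | top => exact le_refl _
    | coe a =>
      rw [← EReal.coe_add] at h
      exact absurd h (EReal.coe_lt_top _).not_ge
  | coe a =>
    induction x with
    | bot =>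
      rw [← EReal.coe_add, EReal.bot_add] at h
      exact absurd h (by simp)
    | top => exact le_top
    | coe b =>
      simp only [← EReal.coe_add] at h ⊢
      rw [EReal.coe_le_coe_iff] at h ⊢
      linarith

end AuxLemmas

/-- If `ξ` is a strong Fréchet subdifferential at `ρ ∈ P₂ʳ` of
`F(·) = G(·) + W₂²(p, ·)/(2γ)`, where `G` is lower semi-continuous with `Dom(G) ⊂ P₂ʳ`,
then `ξ + (T_ρ^p - Id)/γ` is a strong Fréchet subdifferential of `G` at `ρ`. -/
theorem stmt_2 {d : ℕ} (G : Measure (Ed d) → EReal)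
    (hGlsc : LscOnP2 G) (hGdom : ∀ μ : Measure (Ed d), G μ ≠ ⊤ → MemP2r μ)
    (γ : ℝ) (hγ : 0 < γ) (p : Measure (Ed d)) (hp : MemP2r p)
    (ρ : Measure (Ed d)) (hρ : MemP2r ρ)
    (Tρp : Ed d → Ed d) (hTρp : IsOTMap ρ p Tρp)
    (ξ : Ed d → Ed d) (hξ : IsStrongSubdiff (JKOfun G γ p) ρ ξ) :
    IsStrongSubdiff G ρ (fun x => ξ x + γ⁻¹ • (Tρp x - x)) := by
  obtain ⟨hξ2, hξsub⟩ := hξ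
  obtain ⟨hTmeas, hTmap, hTcost⟩ := hTρp
  haveI : IsProbabilityMeasure ρ := hρ.1.1
  haveI : IsProbabilityMeasure p := hp.1.1
  have hW2ρp_lt : W2sq ρ p < ⊤ := W2sq_lt_top hρ.1 hp.1
  set u : Ed d → Ed d := fun x => Tρp x - x with hu_def
  have humeas : Measurable u := hTmeas.sub measurable_id
  have hucost : ∫⁻ x, (‖u x‖₊ : ℝ≥0∞) ^ 2 ∂ρ = W2sq ρ p := by
    rw [← hTcost]
    refine lintegral_congr fun x => ?_
    simp only [hu_def]
    rw [← neg_sub x (Tρp x), nnnorm_neg]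
  have hu2 : MemLp u 2 ρ := memℒp_of_lintegral_sq_lt_top humeas.aestronglyMeasurable
    (by rw [hucost]; exact hW2ρp_lt)
  have hIu_int : Integrable (fun x => ‖u x‖ ^ 2) ρ :=
    (memLp_two_iff_integrable_sq_norm hu2.1).mp hu2
  have hWρp_eq : W2sq ρ p = ENNReal.ofReal (∫ x, ‖u x‖ ^ 2 ∂ρ) := by
    rw [← hucost, sq_lintegral_eq hu2]
  constructor
  · exact hξ2.add (hu2.const_smul γ⁻¹)
  intro ε hε
  obtain ⟨δ₀, hδ₀, hsub⟩ := hξsub (ε / 2) (by linarith)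
  refine ⟨min δ₀ (γ * ε), lt_min hδ₀ (by positivity), fun v hv2 hvδ => ?_⟩
  have hvδ₀ : L2norm ρ v ≤ δ₀ := le_trans hvδ (min_le_left _ _)
  have hvγε : L2norm ρ v ≤ γ * ε := le_trans hvδ (min_le_right _ _)
  have hF := hsub v hv2 hvδ₀
  have hs0 : 0 ≤ L2norm ρ v := Real.sqrt_nonneg _
  have hIv0 : 0 ≤ ∫ x, ‖v x‖ ^ 2 ∂ρ := integral_nonneg fun x => sq_nonneg _
  have hIv : ∫ x, ‖v x‖ ^ 2 ∂ρ = (L2norm ρ v) ^ 2 := (Real.sq_sqrt hIv0).symm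
  have hIv_int : Integrable (fun x => ‖v x‖ ^ 2) ρ :=
    (memLp_two_iff_integrable_sq_norm hv2.1).mp hv2
  have hiuv : Integrable (fun x => ⟪u x, v x⟫) ρ := integrable_inner_of_memℒp hu2 hv2
  have hiξv : Integrable (fun x => ⟪ξ x, v x⟫) ρ := integrable_inner_of_memℒp hξ2 hv2
  have huv2 : MemLp (fun x => u x - v x) 2 ρ := hu2.sub hv2
  have hJ_exp : ∫ x, ‖u x - v x‖ ^ 2 ∂ρ =
      (∫ x, ‖u x‖ ^ 2 ∂ρ) - 2 * (∫ x, ⟪u x, v x⟫ ∂ρ) + (L2norm ρ v) ^ 2 := by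
    rw [← hIv]
    calc ∫ x, ‖u x - v x‖ ^ 2 ∂ρ
        = ∫ x, (‖u x‖ ^ 2 - 2 * ⟪u x, v x⟫ + ‖v x‖ ^ 2) ∂ρ :=
          integral_congr_ae (Filter.Eventually.of_forall fun x => norm_sub_sq_real _ _)
      _ = _ := by
          have hsub_int : Integrable (fun x => ‖u x‖ ^ 2 - 2 * ⟪u x, v x⟫) ρ :=
            hIu_int.sub (hiuv.const_mul 2)
          have hmul_int : Integrable (fun x => 2 * ⟪u x, v x⟫) ρ := hiuv.const_mul 2
          rw [integral_add hsub_int hIv_int, integral_sub hIu_int hmul_int,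
            integral_const_mul]
  have hJ0 : 0 ≤ ∫ x, ‖u x - v x‖ ^ 2 ∂ρ := integral_nonneg fun x => sq_nonneg _
  have hRmeas : AEMeasurable (fun x => x + v x) ρ :=
    aemeasurable_id.add hv2.1.aemeasurable
  have hkey : W2sq p (ρ.map (fun x => x + v x)) ≤
      ENNReal.ofReal (∫ x, ‖u x - v x‖ ^ 2 ∂ρ) := by
    rw [← sq_lintegral_eq huv2]
    refine le_trans (W2sq_map_le hTmeas hTmap hRmeas)
      (le_of_eq (lintegral_congr fun x => ?_))
    simp only [hu_def]
    rw [sub_add_eq_sub_sub]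
  -- EReal bookkeeping
  simp only [JKOfun] at hF
  have hc0 : (0:ℝ) < 1 / (2 * γ) := by positivity
  have hA0 : 0 ≤ 1 / (2 * γ) * ∫ x, ‖u x‖ ^ 2 ∂ρ := mul_nonneg hc0.le (integral_nonneg fun x => sq_nonneg _)
  have hYA : ((ENNReal.ofReal (1 / (2 * γ)) * W2sq p ρ : ℝ≥0∞) : EReal)
      = ((1 / (2 * γ) * ∫ x, ‖u x‖ ^ 2 ∂ρ : ℝ) : EReal) := by
    rw [W2sq_symm, hWρp_eq, ← ENNReal.ofReal_mul hc0.le, EReal.coe_ennreal_ofReal,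
      max_eq_left hA0]
  have hBle' : (ENNReal.ofReal (1 / (2 * γ)) * W2sq p (ρ.map (fun x => x + v x)) : ℝ≥0∞)
      ≤ ENNReal.ofReal (1 / (2 * γ) * ∫ x, ‖u x - v x‖ ^ 2 ∂ρ) := by
    rw [ENNReal.ofReal_mul hc0.le]
    exact mul_le_mul_right hkey _
  have hBlt : (ENNReal.ofReal (1 / (2 * γ)) * W2sq p (ρ.map (fun x => x + v x)) : ℝ≥0∞) < ⊤ :=
    lt_of_le_of_lt hBle' ENNReal.ofReal_lt_top
  set B := (ENNReal.ofReal (1 / (2 * γ)) * W2sq p (ρ.map (fun x => x + v x)) : ℝ≥0∞).toReal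
    with hB_def
  have hBle : B ≤ 1 / (2 * γ) * ∫ x, ‖u x - v x‖ ^ 2 ∂ρ := by
    calc B ≤ (ENNReal.ofReal (1 / (2 * γ) * ∫ x, ‖u x - v x‖ ^ 2 ∂ρ)).toReal :=
          ENNReal.toReal_mono ENNReal.ofReal_ne_top hBle'
      _ = 1 / (2 * γ) * ∫ x, ‖u x - v x‖ ^ 2 ∂ρ :=
          ENNReal.toReal_ofReal (by positivity)
  have hXB : ((ENNReal.ofReal (1 / (2 * γ)) * W2sq p (ρ.map (fun x => x + v x)) : ℝ≥0∞) : EReal)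
      = (B : ℝ) := by
    conv_lhs => rw [← ENNReal.ofReal_toReal hBlt.ne]
    rw [EReal.coe_ennreal_ofReal, max_eq_left ENNReal.toReal_nonneg]
  rw [hXB, hYA] at hF
  -- compute the inner product in the goal
  have hr'eq : L2inner ρ (fun x => ξ x + γ⁻¹ • (Tρp x - x)) v
      = L2inner ρ ξ v + γ⁻¹ * ∫ x, ⟪u x, v x⟫ ∂ρ := by
    unfold L2inner
    have hmul_int : Integrable (fun x => γ⁻¹ * ⟪u x, v x⟫) ρ := hiuv.const_mul γ⁻¹
    rw [← integral_const_mul, ← integral_add hiξv hmul_int]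
    refine integral_congr_ae (Filter.Eventually.of_forall fun x => ?_)
    simp only [hu_def]
    rw [inner_add_left, real_inner_smul_left]
  show G ρ + _ ≤ _
  rw [hr'eq]
  have har : G ρ + ((1 / (2 * γ) * ∫ x, ‖u x‖ ^ 2 ∂ρ : ℝ) : EReal)
      + ((L2inner ρ ξ v - ε / 2 * L2norm ρ v : ℝ) : EReal)
      = G ρ + ((1 / (2 * γ) * ∫ x, ‖u x‖ ^ 2 ∂ρ
          + (L2inner ρ ξ v - ε / 2 * L2norm ρ v) : ℝ) : EReal) := by
    rw [add_assoc, EReal.coe_add]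
  rw [har] at hF
  refine ereal_key hF ?_
  -- final real inequality
  have h1 : γ⁻¹ * L2norm ρ v ≤ ε := by
    rw [inv_mul_le_iff₀ hγ]; exact hvγε
  have h2 : γ⁻¹ * L2norm ρ v * L2norm ρ v ≤ ε * L2norm ρ v :=
    mul_le_mul_of_nonneg_right h1 hs0
  have hc2 : 1 / (2 * γ) = γ⁻¹ / 2 := by
    field_simp
  rw [hJ_exp, hc2] at hBle
  rw [hc2]
  nlinarith [hBle, h2, sq_nonneg (L2norm ρ v)]


end
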